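/- arXiv:1905.09919 — 2 statements merged into one kernel-verified Lean document; each statement's English description precedes it below -/
import Mathlib

section
/- Let X be a finite index set. For each i ∈ X, let I_i be an m × m real symmetric positive semidefinite matrix, and let I_x be an m × m real symmetric positive definite matrix. Define the E-optimality set function f^E(S) = λ_min(I_x + Σ_{i∈S} I_i) − λ_min(I_x) for S ⊆ X, and write f^E_j(S) = f^E(S ∪ {j}) − f^E(S). Then for all S ⊆ T ⊂ X and j ∈ X \ T, it holds that f^E_j(T) − f^E_j(S) ≤ λ_max(I_j) − λ_min(I_j). -/
open Finset Matrix

/-- The smallest eigenvalue of a (symmetric) real matrix: the infimum of its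
real spectrum. -/
noncomputable def lambdaMin {m : ℕ} (A : Matrix (Fin m) (Fin m) ℝ) : ℝ :=
  sInf (spectrum ℝ A)

/-- The largest eigenvalue of a (symmetric) real matrix: the supremum of its
real spectrum. -/
noncomputable def lambdaMax {m : ℕ} (A : Matrix (Fin m) (Fin m) ℝ) : ℝ :=
  sSup (spectrum ℝ A)

section aux
variable {m : ℕ} {A B : Matrix (Fin m) (Fin m) ℝ}

lemma lambdaMin_le_eigenvalues (hA : A.IsHermitian) (i : Fin m) :
    lambdaMin A ≤ hA.eigenvalues i := by
  rw [lambdaMin, hA.spectrum_real_eq_range_eigenvalues]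
  exact csInf_le (Set.Finite.bddBelow (Set.finite_range _)) ⟨i, rfl⟩

lemma eigenvalues_le_lambdaMax (hA : A.IsHermitian) (i : Fin m) :
    hA.eigenvalues i ≤ lambdaMax A := by
  rw [lambdaMax, hA.spectrum_real_eq_range_eigenvalues]
  exact le_csSup (Set.Finite.bddAbove (Set.finite_range _)) ⟨i, rfl⟩

lemma exists_lambdaMin (hA : A.IsHermitian) [Nonempty (Fin m)] :
    ∃ i, lambdaMin A = hA.eigenvalues i := by
  have := Set.Nonempty.csInf_mem (s := Set.range hA.eigenvalues)
    (Set.range_nonempty _) (Set.finite_range _)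
  rw [lambdaMin, hA.spectrum_real_eq_range_eigenvalues]
  obtain ⟨i, hi⟩ := this
  exact ⟨i, hi.symm⟩

lemma quad_eq (hA : A.IsHermitian) (x : Fin m → ℝ) :
    x ⬝ᵥ (A *ᵥ x) = ∑ i, hA.eigenvalues i *
      ((star (hA.eigenvectorUnitary : Matrix (Fin m) (Fin m) ℝ) *ᵥ x) i) ^ 2 := by
  set U : Matrix (Fin m) (Fin m) ℝ := (hA.eigenvectorUnitary : Matrix (Fin m) (Fin m) ℝ) with hU
  set y : Fin m → ℝ := star U *ᵥ x with hy
  have hxU : x ᵥ* U = y := by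
    rw [hy]
    ext i
    simp [mulVec, vecMul, dotProduct, conjTranspose_apply, mul_comm]
  conv_lhs => rw [hA.spectral_theorem, Unitary.conjStarAlgAut_apply, ← hU]
  rw [← mulVec_mulVec, ← mulVec_mulVec, dotProduct_mulVec, hxU, ← hy]
  simp [dotProduct, mulVec_diagonal, RCLike.ofReal_real_eq_id]
  exact Finset.sum_congr rfl fun i _ => by ring

lemma norm_eq (hA : A.IsHermitian) (x : Fin m → ℝ) :
    (star (hA.eigenvectorUnitary : Matrix (Fin m) (Fin m) ℝ) *ᵥ x) ⬝ᵥ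
      (star (hA.eigenvectorUnitary : Matrix (Fin m) (Fin m) ℝ) *ᵥ x) = x ⬝ᵥ x := by
  set U : Matrix (Fin m) (Fin m) ℝ := (hA.eigenvectorUnitary : Matrix (Fin m) (Fin m) ℝ) with hU
  have hxU : x ᵥ* U = star U *ᵥ x := by
    ext i
    simp [mulVec, vecMul, dotProduct, conjTranspose_apply, mul_comm]
  nth_rewrite 1 [← hxU]
  rw [← dotProduct_mulVec, mulVec_mulVec]
  rw [show U * star U = 1 from Unitary.coe_mul_star_self _, one_mulVec]

lemma rayleigh_lower (hA : A.IsHermitian) (x : Fin m → ℝ) :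
    lambdaMin A * (x ⬝ᵥ x) ≤ x ⬝ᵥ (A *ᵥ x) := by
  rw [quad_eq hA x, ← norm_eq hA x]
  set y := star (hA.eigenvectorUnitary : Matrix (Fin m) (Fin m) ℝ) *ᵥ x
  rw [show y ⬝ᵥ y = ∑ i, (y i) ^ 2 by simp [dotProduct, sq], Finset.mul_sum]
  exact Finset.sum_le_sum fun i _ =>
    mul_le_mul_of_nonneg_right (lambdaMin_le_eigenvalues hA i) (sq_nonneg _)

lemma rayleigh_upper (hA : A.IsHermitian) (x : Fin m → ℝ) :
    x ⬝ᵥ (A *ᵥ x) ≤ lambdaMax A * (x ⬝ᵥ x) := by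
  rw [quad_eq hA x, ← norm_eq hA x]
  set y := star (hA.eigenvectorUnitary : Matrix (Fin m) (Fin m) ℝ) *ᵥ x
  rw [show y ⬝ᵥ y = ∑ i, (y i) ^ 2 by simp [dotProduct, sq], Finset.mul_sum]
  exact Finset.sum_le_sum fun i _ =>
    mul_le_mul_of_nonneg_right (eigenvalues_le_lambdaMax hA i) (sq_nonneg _)

/-- a unit vector attaining lambdaMin -/
lemma exists_min_vector (hA : A.IsHermitian) [Nonempty (Fin m)] :
    ∃ x : Fin m → ℝ, x ⬝ᵥ x = 1 ∧ x ⬝ᵥ (A *ᵥ x) = lambdaMin A := by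
  obtain ⟨i, hi⟩ := exists_lambdaMin hA
  have hnorm : ⇑(hA.eigenvectorBasis i) ⬝ᵥ ⇑(hA.eigenvectorBasis i) = 1 := by
    have h := hA.eigenvectorBasis.orthonormal.1 i
    have h2 : (inner ℝ (hA.eigenvectorBasis i) (hA.eigenvectorBasis i) : ℝ) = 1 := by
      rw [real_inner_self_eq_norm_sq, h]; norm_num
    rw [EuclideanSpace.inner_eq_star_dotProduct] at h2
    simpa using h2
  refine ⟨⇑(hA.eigenvectorBasis i), hnorm, ?_⟩
  rw [hA.mulVec_eigenvectorBasis i, dotProduct_smul, smul_eq_mul, hnorm, mul_one, hi]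

lemma weyl_upper [Nonempty (Fin m)] (hA : A.IsHermitian) (hB : B.IsHermitian) :
    lambdaMin (A + B) ≤ lambdaMin A + lambdaMax B := by
  obtain ⟨x, hx1, hx2⟩ := exists_min_vector hA
  have h1 := rayleigh_lower (hA.add hB) x
  have h2 := rayleigh_upper hB x
  rw [hx1, mul_one] at h1 h2
  rw [add_mulVec, dotProduct_add, hx2] at h1
  linarith

lemma weyl_lower [Nonempty (Fin m)] (hA : A.IsHermitian) (hB : B.IsHermitian) :
    lambdaMin A + lambdaMin B ≤ lambdaMin (A + B) := by
  obtain ⟨x, hx1, hx2⟩ := exists_min_vector (hA.add hB)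
  have h1 := rayleigh_lower hA x
  have h2 := rayleigh_lower hB x
  rw [hx1, mul_one] at h1 h2
  rw [add_mulVec, dotProduct_add] at hx2
  linarith
end aux

lemma lambdaMin_of_isEmpty {m : ℕ} {A : Matrix (Fin m) (Fin m) ℝ} [IsEmpty (Fin m)] (hA : A.IsHermitian) : lambdaMin A = 0 := by
  rw [lambdaMin, hA.spectrum_real_eq_range_eigenvalues, Set.range_eq_empty, Real.sInf_empty]

lemma lambdaMax_of_isEmpty {m : ℕ} {A : Matrix (Fin m) (Fin m) ℝ} [IsEmpty (Fin m)] (hA : A.IsHermitian) : lambdaMax A = 0 := by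
  rw [lambdaMax, hA.spectrum_real_eq_range_eigenvalues, Set.range_eq_empty, Real.sSup_empty]


/-- Additive weak-submodularity bound for the E-optimality
criterion `f^E(S) = λ_min(I_x + Σ_{i∈S} I_i) − λ_min(I_x)`: for `S ⊆ T ⊂ X`
and `j ∉ T`, `f^E_j(T) − f^E_j(S) ≤ λ_max(I_j) − λ_min(I_j)`. -/
theorem stmt_12 {ι : Type*} [Fintype ι] [DecidableEq ι] {m : ℕ}
    (I : ι → Matrix (Fin m) (Fin m) ℝ) (hI : ∀ i, (I i).PosSemidef)
    (Ix : Matrix (Fin m) (Fin m) ℝ) (hIx : Ix.PosDef)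
    (fE : Finset ι → ℝ)
    (hfE : ∀ S : Finset ι,
      fE S = lambdaMin (Ix + ∑ i ∈ S, I i) - lambdaMin Ix) :
    ∀ (S T : Finset ι) (j : ι), S ⊆ T → j ∉ T →
      (fE (insert j T) - fE T) - (fE (insert j S) - fE S) ≤
        lambdaMax (I j) - lambdaMin (I j) := by

  intro S T j hST hjT
  have hjS : j ∉ S := fun h => hjT (hST h)
  have hHerm : ∀ W : Finset ι, (Ix + ∑ i ∈ W, I i).IsHermitian := fun W => by
    refine hIx.isHermitian.add ?_
    unfold Matrix.IsHermitian
    rw [conjTranspose_sum]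
    exact Finset.sum_congr rfl fun i _ => (hI i).isHermitian
  have eT : Ix + ∑ i ∈ insert j T, I i = (Ix + ∑ i ∈ T, I i) + I j := by
    rw [Finset.sum_insert hjT]; abel
  have eS : Ix + ∑ i ∈ insert j S, I i = (Ix + ∑ i ∈ S, I i) + I j := by
    rw [Finset.sum_insert hjS]; abel
  rcases isEmpty_or_nonempty (Fin m) with hm | hm
  · simp only [hfE, lambdaMin_of_isEmpty (hHerm _), lambdaMin_of_isEmpty hIx.isHermitian,
      lambdaMax_of_isEmpty (hI j).isHermitian, lambdaMin_of_isEmpty (hI j).isHermitian]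
    norm_num
  · have h1 : lambdaMin (Ix + ∑ i ∈ insert j T, I i) ≤
        lambdaMin (Ix + ∑ i ∈ T, I i) + lambdaMax (I j) := by
      rw [eT]; exact weyl_upper (hHerm T) (hI j).isHermitian
    have h2 : lambdaMin (Ix + ∑ i ∈ S, I i) + lambdaMin (I j) ≤
        lambdaMin (Ix + ∑ i ∈ insert j S, I i) := by
      rw [eS]; exact weyl_lower (hHerm S) (hI j).isHermitian
    simp only [hfE]
    linarith
end

section
/- Let X be a finite index set. For each i ∈ X, let x_i ∈ ℝ^m be nonzero and σ_i > 0; let P and I_x be m × m real symmetric positive definite matrices. In the rank-one quadratic setting write F̃_S = I_x + Σ_{i∈S} (1/σ_i²)·x_i x_i^⊤ P x_i x_i^⊤ and B_X = F̃_X^{-1} (the Van Trees bound for the full set), and define the A-optimality set function f^A(S) = Tr(I_x^{-1}) − Tr(F̃_S^{-1}) with marginal gains f^A_j(S) = f^A(S ∪ {j}) − f^A(S). Then for all S ⊆ T ⊂ X and j ∈ X \ T, f^A_j(T) ≤ γ_j · f^A_j(S), where γ_j = λ_max(I_x^{-1})² · (λ_max(σ_j² P) + 1) / ( λ_min(B_X)²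 · (λ_min(σ_j² P) + 1) ). -/
open Finset Matrix

variable {m : ℕ}

lemma dot_sym {A : Matrix (Fin m) (Fin m) ℝ} (hA : A.IsHermitian) (u v : Fin m → ℝ) :
    u ⬝ᵥ A *ᵥ v = (A *ᵥ u) ⬝ᵥ v := by
  have hT : Aᵀ = A := by
    exact (Matrix.isHermitian_iff_isSymm.mp hA).eq
  rw [dotProduct_mulVec, ← mulVec_transpose, hT]

lemma vecMulVec_mul_mul_vecMulVec (u : Fin m → ℝ) (B : Matrix (Fin m) (Fin m) ℝ) :
    vecMulVec u u * B * vecMulVec u u = (u ⬝ᵥ B *ᵥ u) • vecMulVec u u := by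
  ext i j
  simp only [mul_apply, vecMulVec_apply, Matrix.smul_apply, smul_eq_mul, dotProduct, mulVec,
    Finset.sum_mul, Finset.mul_sum]
  rw [Finset.sum_comm]
  congr 1
  ext k
  congr 1
  ext l
  ring

lemma trace_vecMulVec_mul (u v : Fin m → ℝ) (N : Matrix (Fin m) (Fin m) ℝ) :
    (vecMulVec u v * N).trace = v ⬝ᵥ N *ᵥ u := by
  simp only [Matrix.trace, diag_apply, mul_apply, vecMulVec_apply, dotProduct, mulVec]
  rw [Finset.sum_comm]
  congr 1; ext k
  simp [Finset.mul_sum]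
  congr 1; ext l
  ring

lemma sherman_morrison {A : Matrix (Fin m) (Fin m) ℝ} (hA : A.PosDef)
    (u : Fin m → ℝ) {c : ℝ} (hc : 0 ≤ c) :
    (A + c • vecMulVec u u)⁻¹ =
      A⁻¹ - (c / (1 + c * (u ⬝ᵥ A⁻¹ *ᵥ u))) • (A⁻¹ * vecMulVec u u * A⁻¹) := by
  have hdet : IsUnit A.det := isUnit_iff_ne_zero.mpr (ne_of_gt hA.det_pos)
  have hAA : A * A⁻¹ = 1 := A.mul_nonsing_inv hdet
  set b : ℝ := u ⬝ᵥ A⁻¹ *ᵥ u with hb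
  have hbnn : 0 ≤ b := by
    have := hA.inv.posSemidef.dotProduct_mulVec_nonneg u
    simpa using this
  have hden : (0:ℝ) < 1 + c * b := by positivity
  set M := vecMulVec u u with hM
  set d : ℝ := c / (1 + c * b) with hd
  have key : M * A⁻¹ * M = b • M := vecMulVec_mul_mul_vecMulVec u A⁻¹
  have hA1 : ∀ N, A * (A⁻¹ * N) = N := fun N => by rw [← Matrix.mul_assoc, hAA, one_mul]
  have key2 : M * (A⁻¹ * (M * A⁻¹)) = b • (M * A⁻¹) := by
    rw [← Matrix.mul_assoc, ← Matrix.mul_assoc, key, smul_mul_assoc]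
  apply Matrix.inv_eq_right_inv
  simp only [add_mul, mul_sub, smul_mul_assoc, mul_smul_comm, smul_smul, Matrix.mul_assoc,
    hAA, hA1, key2]
  have hcb : d * (1 + c * b) = c := div_mul_cancel₀ _ (ne_of_gt hden)
  have hne : (1:ℝ) + c * b ≠ 0 := ne_of_gt hden
  match_scalars
  · ring
  · linear_combination (-c) * mul_inv_cancel₀ hne

lemma trace_inv_add_rankOne {A : Matrix (Fin m) (Fin m) ℝ} (hA : A.PosDef)
    (u : Fin m → ℝ) {c : ℝ} (hc : 0 ≤ c) :
    (A + c • vecMulVec u u)⁻¹.trace =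
      A⁻¹.trace - (c / (1 + c * (u ⬝ᵥ A⁻¹ *ᵥ u))) * (u ⬝ᵥ (A⁻¹ * A⁻¹) *ᵥ u) := by
  rw [sherman_morrison hA u hc, Matrix.trace_sub, Matrix.trace_smul]
  congr 1
  rw [smul_eq_mul]
  congr 1
  rw [Matrix.trace_mul_cycle, Matrix.trace_mul_comm, trace_vecMulVec_mul]

lemma dot_mulVec_left (B : Matrix (Fin m) (Fin m) ℝ) (a c : Fin m → ℝ) :
    (B *ᵥ a) ⬝ᵥ c = a ⬝ᵥ (Bᵀ *ᵥ c) := by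
  rw [dotProduct_comm, Matrix.dotProduct_mulVec, Matrix.mulVec_transpose, dotProduct_comm]

lemma conj_diag_quad (U : Matrix (Fin m) (Fin m) ℝ)
    (d : Fin m → ℝ) (v : Fin m → ℝ) :
    v ⬝ᵥ (U * diagonal d * star U) *ᵥ v = ∑ i, d i * ((star U *ᵥ v) i)^2 := by
  have hsU : star U = Uᵀ := Matrix.conjTranspose_eq_transpose_of_trivial U
  rw [← Matrix.mulVec_mulVec, ← Matrix.mulVec_mulVec, Matrix.dotProduct_mulVec,
    ← Matrix.mulVec_transpose, ← hsU]
  simp only [dotProduct, Matrix.mulVec_diagonal]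
  exact Finset.sum_congr rfl fun i _ => by ring

lemma conj_norm (U : Matrix (Fin m) (Fin m) ℝ) (hU : U * star U = 1) (v : Fin m → ℝ) :
    v ⬝ᵥ v = ∑ i, ((star U *ᵥ v) i)^2 := by
  have h := conj_diag_quad U (fun _ => (1:ℝ)) v
  simp only [Matrix.diagonal_one, Matrix.mul_one, one_mul] at h
  rw [← h, hU]
  simp

lemma posDef_decomp {Q : Matrix (Fin m) (Fin m) ℝ} (hQ : Q.PosDef) (v : Fin m → ℝ) :
    ∃ (μ y : Fin m → ℝ),
      spectrum ℝ Q = Set.range μ ∧ (∀ i, 0 < μ i) ∧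
      v ⬝ᵥ v = ∑ i, (y i)^2 ∧
      v ⬝ᵥ Q *ᵥ v = ∑ i, μ i * (y i)^2 ∧
      v ⬝ᵥ Q⁻¹ *ᵥ v = ∑ i, (μ i)⁻¹ * (y i)^2 := by
  have hH := hQ.isHermitian
  set μ := hH.eigenvalues with hμ
  set U := (hH.eigenvectorUnitary : Matrix (Fin m) (Fin m) ℝ) with hUdef
  have hU : U * star U = 1 := Matrix.mem_unitaryGroup_iff.mp hH.eigenvectorUnitary.2
  have hU' : star U * U = 1 := Matrix.mem_unitaryGroup_iff'.mp hH.eigenvectorUnitary.2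
  have hspec : Q = U * diagonal μ * star U := by
    have h := hH.spectral_theorem
    simpa using h
  have hpos : ∀ i, 0 < μ i := hQ.eigenvalues_pos
  have h1 : ∀ N : Matrix (Fin m) (Fin m) ℝ, star U * (U * N) = N := fun N => by
    rw [← Matrix.mul_assoc, hU', Matrix.one_mul]
  have h2 : diagonal μ * (diagonal (fun i => (μ i)⁻¹) * star U) = star U := by
    rw [← Matrix.mul_assoc, Matrix.diagonal_mul_diagonal]
    have : (fun i => μ i * (μ i)⁻¹) = fun _ => (1:ℝ) :=
      funext fun i => mul_inv_cancel₀ (ne_of_gt (hpos i))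
    rw [this, Matrix.diagonal_one, Matrix.one_mul]
  have hQi : Q⁻¹ = U * diagonal (fun i => (μ i)⁻¹) * star U := by
    apply Matrix.inv_eq_right_inv
    conv_lhs => rw [hspec]
    simp only [Matrix.mul_assoc, h1, h2, hU]
  refine ⟨μ, star U *ᵥ v, hH.spectrum_real_eq_range_eigenvalues, hpos, conj_norm U hU v, ?_, ?_⟩
  · conv_lhs => rw [hspec]
    exact conj_diag_quad U μ v
  · rw [hQi]
    exact conj_diag_quad U _ v

section EigBounds
variable {Q : Matrix (Fin m) (Fin m) ℝ}

lemma lambdaMax_ge (hQ : Q.PosDef) {t : ℝ} (ht : t ∈ spectrum ℝ Q) : t ≤ lambdaMax Q :=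
  le_csSup (Matrix.finite_real_spectrum (A := Q)).bddAbove ht

lemma lambdaMin_le (hQ : Q.PosDef) {t : ℝ} (ht : t ∈ spectrum ℝ Q) : lambdaMin Q ≤ t :=
  csInf_le (Matrix.finite_real_spectrum (A := Q)).bddBelow ht

lemma lambdaMin_pos (hQ : Q.PosDef) (hm : 0 < m) : 0 < lambdaMin Q := by
  obtain ⟨μ, y, hsp, hpos, -, -, -⟩ := posDef_decomp hQ 0
  have hne : (spectrum ℝ Q).Nonempty := by
    rw [hsp]; exact ⟨μ ⟨0, hm⟩, ⟨⟨0, hm⟩, rfl⟩⟩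
  have hmem := hne.csInf_mem (Matrix.finite_real_spectrum (A := Q))
  rw [hsp] at hmem
  obtain ⟨i, hi⟩ := hmem
  rw [lambdaMin, hsp, ← hi] at *
  exact hi ▸ hpos i

lemma quad_le_lambdaMax_mul (hQ : Q.PosDef) (v : Fin m → ℝ) :
    v ⬝ᵥ Q *ᵥ v ≤ lambdaMax Q * (v ⬝ᵥ v) := by
  obtain ⟨μ, y, hsp, hpos, hn, hq, -⟩ := posDef_decomp hQ v
  rw [hq, hn, Finset.mul_sum]
  refine Finset.sum_le_sum fun i _ => ?_
  exact mul_le_mul_of_nonneg_right (lambdaMax_ge hQ (by rw [hsp]; exact ⟨i, rfl⟩)) (sq_nonneg _)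

lemma lambdaMin_mul_le_quad (hQ : Q.PosDef) (v : Fin m → ℝ) :
    lambdaMin Q * (v ⬝ᵥ v) ≤ v ⬝ᵥ Q *ᵥ v := by
  obtain ⟨μ, y, hsp, hpos, hn, hq, -⟩ := posDef_decomp hQ v
  rw [hq, hn, Finset.mul_sum]
  refine Finset.sum_le_sum fun i _ => ?_
  exact mul_le_mul_of_nonneg_right (lambdaMin_le hQ (by rw [hsp]; exact ⟨i, rfl⟩)) (sq_nonneg _)

lemma dot_le_lambdaMax_mul_inv (hQ : Q.PosDef) (v : Fin m → ℝ) :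
    v ⬝ᵥ v ≤ lambdaMax Q * (v ⬝ᵥ Q⁻¹ *ᵥ v) := by
  obtain ⟨μ, y, hsp, hpos, hn, -, hqi⟩ := posDef_decomp hQ v
  rw [hqi, hn, Finset.mul_sum]
  refine Finset.sum_le_sum fun i _ => ?_
  have h1 : (y i)^2 = μ i * ((μ i)⁻¹ * (y i)^2) := by
    rw [← mul_assoc, mul_inv_cancel₀ (ne_of_gt (hpos i)), one_mul]
  conv_lhs => rw [h1]
  exact mul_le_mul_of_nonneg_right (lambdaMax_ge hQ (by rw [hsp]; exact ⟨i, rfl⟩))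
    (mul_nonneg (inv_nonneg.mpr (hpos i).le) (sq_nonneg _))

lemma lambdaMin_mul_inv_le_dot (hQ : Q.PosDef) (v : Fin m → ℝ) :
    lambdaMin Q * (v ⬝ᵥ Q⁻¹ *ᵥ v) ≤ v ⬝ᵥ v := by
  obtain ⟨μ, y, hsp, hpos, hn, -, hqi⟩ := posDef_decomp hQ v
  rw [hqi, hn, Finset.mul_sum]
  refine Finset.sum_le_sum fun i _ => ?_
  have h1 : (y i)^2 = μ i * ((μ i)⁻¹ * (y i)^2) := by
    rw [← mul_assoc, mul_inv_cancel₀ (ne_of_gt (hpos i)), one_mul]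
  conv_rhs => rw [h1]
  exact mul_le_mul_of_nonneg_right (lambdaMin_le hQ (by rw [hsp]; exact ⟨i, rfl⟩))
    (mul_nonneg (inv_nonneg.mpr (hpos i).le) (sq_nonneg _))

end EigBounds

lemma two_dot_sub_quad_le_inv_quad {A : Matrix (Fin m) (Fin m) ℝ} (hA : A.PosDef)
    (x y : Fin m → ℝ) : 2 * (y ⬝ᵥ x) - y ⬝ᵥ A *ᵥ y ≤ x ⬝ᵥ A⁻¹ *ᵥ x := by
  have hdet : IsUnit A.det := isUnit_iff_ne_zero.mpr (ne_of_gt hA.det_pos)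
  set w := A⁻¹ *ᵥ x with hw
  have hAw : A *ᵥ w = x := by
    rw [hw, Matrix.mulVec_mulVec, A.mul_nonsing_inv hdet, Matrix.one_mulVec]
  have h0 : 0 ≤ (y - w) ⬝ᵥ A *ᵥ (y - w) := by
    have := hA.posSemidef.dotProduct_mulVec_nonneg (y - w); simpa using this
  have hexp : (y - w) ⬝ᵥ A *ᵥ (y - w)
      = y ⬝ᵥ A *ᵥ y - y ⬝ᵥ x - x ⬝ᵥ y + x ⬝ᵥ A⁻¹ *ᵥ x := by
    rw [Matrix.mulVec_sub, dotProduct_sub, sub_dotProduct, sub_dotProduct]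
    have h1 : y ⬝ᵥ A *ᵥ w = y ⬝ᵥ x := by rw [hAw]
    have h2 : w ⬝ᵥ A *ᵥ y = x ⬝ᵥ y := by rw [dot_sym hA.1, hAw]
    have h3 : w ⬝ᵥ A *ᵥ w = x ⬝ᵥ A⁻¹ *ᵥ x := by
      rw [dot_sym hA.1, hAw, dotProduct_comm]
    rw [h1, h2, h3]; ring
  have hc := dotProduct_comm x y
  rw [hexp] at h0; linarith

lemma inv_quad_antitone {A B : Matrix (Fin m) (Fin m) ℝ} (hA : A.PosDef) (hB : B.PosDef)
    (h : ∀ v, v ⬝ᵥ A *ᵥ v ≤ v ⬝ᵥ B *ᵥ v) (x : Fin m → ℝ) :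
    x ⬝ᵥ B⁻¹ *ᵥ x ≤ x ⬝ᵥ A⁻¹ *ᵥ x := by
  have hdet : IsUnit B.det := isUnit_iff_ne_zero.mpr (ne_of_gt hB.det_pos)
  set w := B⁻¹ *ᵥ x with hw
  have hBw : B *ᵥ w = x := by
    rw [hw, Matrix.mulVec_mulVec, B.mul_nonsing_inv hdet, Matrix.one_mulVec]
  have h1 : x ⬝ᵥ B⁻¹ *ᵥ x = 2 * (w ⬝ᵥ x) - w ⬝ᵥ B *ᵥ w := by
    rw [hBw, ← hw, dotProduct_comm]; ring
  rw [h1]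
  calc 2 * (w ⬝ᵥ x) - w ⬝ᵥ B *ᵥ w ≤ 2 * (w ⬝ᵥ x) - w ⬝ᵥ A *ᵥ w := by linarith [h w]
    _ ≤ x ⬝ᵥ A⁻¹ *ᵥ x := two_dot_sub_quad_le_inv_quad hA x w

lemma frac_chain {c aS bS aT bT lM lm g : ℝ} (hc : 0 < c) (hbS : 0 ≤ bS) (hbT : 0 ≤ bT)
    (h1 : aT ≤ lM * bT) (h2 : bT ≤ bS) (h3 : lm * bS ≤ aS) (h4 : 0 ≤ aS)
    (hlm : 0 < lm) (hlM : lm ≤ lM) (hg : lM / lm ≤ g) :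
    c * aT / (1 + c * bT) ≤ g * (c * aS / (1 + c * bS)) := by
  have hlM0 : 0 < lM := lt_of_lt_of_le hlm hlM
  have hdT : (0:ℝ) < 1 + c * bT := by positivity
  have hdS : (0:ℝ) < 1 + c * bS := by positivity
  have step1 : c * aT / (1 + c * bT) ≤ c * (lM * bT) / (1 + c * bT) := by gcongr
  have step2 : c * (lM * bT) / (1 + c * bT) ≤ c * (lM * bS) / (1 + c * bS) := by
    rw [div_le_div_iff₀ hdT hdS]
    nlinarith [mul_nonneg (mul_nonneg hc.le hlM0.le) (sub_nonneg.mpr h2)]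
  have step3 : c * (lM * bS) / (1 + c * bS) = (lM / lm) * (c * (lm * bS) / (1 + c * bS)) := by
    field_simp
  have step4 : (lM / lm) * (c * (lm * bS) / (1 + c * bS))
      ≤ (lM / lm) * (c * aS / (1 + c * bS)) := by gcongr
  have step5 : (lM / lm) * (c * aS / (1 + c * bS)) ≤ g * (c * aS / (1 + c * bS)) :=
    mul_le_mul_of_nonneg_right hg (by positivity)
  linarith

lemma mulVec_vecMulVec (u v : Fin m → ℝ) : vecMulVec u u *ᵥ v = (u ⬝ᵥ v) • u := by
  ext i
  simp only [Matrix.mulVec, vecMulVec_apply, dotProduct, Pi.smul_apply, smul_eq_mul,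
    Finset.sum_mul]
  exact Finset.sum_congr rfl fun k _ => by ring

lemma quad_vecMulVec (u v : Fin m → ℝ) : v ⬝ᵥ (vecMulVec u u) *ᵥ v = (u ⬝ᵥ v)^2 := by
  rw [mulVec_vecMulVec, dotProduct_smul, smul_eq_mul, dotProduct_comm]; ring

lemma isHermitian_smul_vecMulVec (u : Fin m → ℝ) (c : ℝ) :
    (c • vecMulVec u u).IsHermitian := by
  ext i j
  simp [Matrix.conjTranspose_apply, vecMulVec_apply, mul_comm]

lemma posDef_smul {P : Matrix (Fin m) (Fin m) ℝ} (hP : P.PosDef) {c : ℝ} (hc : 0 < c) :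
    (c • P).PosDef := by
  refine Matrix.PosDef.of_dotProduct_mulVec_pos ?_ fun v hv => ?_
  · rw [Matrix.IsHermitian, Matrix.conjTranspose_smul, hP.1, star_trivial]
  · rw [Matrix.smul_mulVec, dotProduct_smul, smul_eq_mul]
    exact mul_pos hc (hP.dotProduct_mulVec_pos hv)

lemma lambdaMin_le_lambdaMax {Q : Matrix (Fin m) (Fin m) ℝ} (hQ : Q.PosDef) (hm : 0 < m) :
    lambdaMin Q ≤ lambdaMax Q := by
  obtain ⟨μ, y, hsp, hpos, -, -, -⟩ := posDef_decomp hQ 0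
  have hmem : μ ⟨0, hm⟩ ∈ spectrum ℝ Q := by rw [hsp]; exact ⟨⟨0, hm⟩, rfl⟩
  exact le_trans (lambdaMin_le hQ hmem) (lambdaMax_ge hQ hmem)

/-- Multiplicative weak-submodularity bound for the A-optimality
criterion in the rank-one quadratic setting: for `S ⊆ T ⊂ X` and `j ∉ T`,
`f^A_j(T) ≤ γ_j · f^A_j(S)`, where
`γ_j = λ_max(I_x⁻¹)²(λ_max(σ_j² P)+1)/(λ_min(B_X)²(λ_min(σ_j² P)+1))` and
`B_X = F̃_X⁻¹` is the Van Trees bound for the full set. -/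
theorem stmt_16 {ι : Type*} [Fintype ι] [DecidableEq ι] {m : ℕ}
    (x : ι → Fin m → ℝ) (hx : ∀ i, x i ≠ 0)
    (σ : ι → ℝ) (hσ : ∀ i, 0 < σ i)
    (P : Matrix (Fin m) (Fin m) ℝ) (hP : P.PosDef)
    (Ix : Matrix (Fin m) (Fin m) ℝ) (hIx : Ix.PosDef)
    (Ftil : Finset ι → Matrix (Fin m) (Fin m) ℝ)
    (hFtil : ∀ S : Finset ι, Ftil S = Ix + ∑ i ∈ S, (1 / (σ i) ^ 2) •
      (vecMulVec (x i) (x i) * P * vecMulVec (x i) (x i)))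
    (BX : Matrix (Fin m) (Fin m) ℝ) (hBX : BX = (Ftil Finset.univ)⁻¹)
    (fA : Finset ι → ℝ)
    (hfA : ∀ S : Finset ι, fA S = Ix⁻¹.trace - (Ftil S)⁻¹.trace)
    (γ : ι → ℝ)
    (hγ : ∀ j, γ j =
      lambdaMax Ix⁻¹ ^ 2 * (lambdaMax ((σ j) ^ 2 • P) + 1) /
        (lambdaMin BX ^ 2 * (lambdaMin ((σ j) ^ 2 • P) + 1))) :
    ∀ (S T : Finset ι) (j : ι), S ⊆ T → j ∉ T →
      fA (insert j T) - fA T ≤ γ j * (fA (insert j S) - fA S) := by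
  intro S T j hST hjT
  rcases Nat.eq_zero_or_pos m with hm | hm
  · subst hm
    exact absurd (funext fun i => i.elim0) (hx j)
  classical
  set c : ι → ℝ := fun i => (x i ⬝ᵥ P *ᵥ x i) / σ i ^ 2 with hcdef
  have hPq : ∀ v : Fin m → ℝ, v ≠ 0 → 0 < v ⬝ᵥ P *ᵥ v := fun v hv => by
    simpa using hP.dotProduct_mulVec_pos hv
  have hIxq : ∀ v : Fin m → ℝ, v ≠ 0 → 0 < v ⬝ᵥ Ix *ᵥ v := fun v hv => by
    simpa using hIx.dotProduct_mulVec_pos hv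
  have hcpos : ∀ i, 0 < c i := fun i => div_pos (hPq (x i) (hx i)) (pow_pos (hσ i) 2)
  have hF : ∀ W : Finset ι, Ftil W = Ix + ∑ i ∈ W, c i • vecMulVec (x i) (x i) := by
    intro W; rw [hFtil W]
    congr 1
    refine Finset.sum_congr rfl fun i _ => ?_
    rw [vecMulVec_mul_mul_vecMulVec, smul_smul]
    congr 1
    ring
  have hterm : ∀ (i : ι) (v : Fin m → ℝ),
      v ⬝ᵥ (c i • vecMulVec (x i) (x i)) *ᵥ v = c i * (x i ⬝ᵥ v)^2 := fun i v => by
    rw [Matrix.smul_mulVec, dotProduct_smul, smul_eq_mul, quad_vecMulVec]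
  have hquadF : ∀ (W : Finset ι) (v : Fin m → ℝ),
      v ⬝ᵥ Ftil W *ᵥ v = v ⬝ᵥ Ix *ᵥ v + ∑ i ∈ W, c i * (x i ⬝ᵥ v)^2 := by
    intro W v
    rw [hF W, Matrix.add_mulVec, dotProduct_add]
    congr 1
    induction W using Finset.induction_on with
    | empty => simp
    | insert _ _ hnotin ih =>
      rw [Finset.sum_insert hnotin, Matrix.add_mulVec, dotProduct_add, Finset.sum_insert hnotin,
        hterm, ih]
  have hFpd : ∀ W : Finset ι, (Ftil W).PosDef := by
    intro W
    refine Matrix.PosDef.of_dotProduct_mulVec_pos ?_ fun v hv => ?_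
    · rw [hF W]
      exact hIx.1.add (Finset.sum_induction _ _ (fun a b ha hb => ha.add hb)
        (Matrix.isHermitian_zero) (fun i _ => isHermitian_smul_vecMulVec (x i) (c i)))
    · have hs : 0 ≤ ∑ i ∈ W, c i * (x i ⬝ᵥ v)^2 :=
        Finset.sum_nonneg fun i _ => mul_nonneg (hcpos i).le (sq_nonneg _)
      have h0 : (0:ℝ) < v ⬝ᵥ Ftil W *ᵥ v := by
        rw [hquadF]
        linarith [hIxq v hv]
      simpa using h0
  have hmono : ∀ (W₁ W₂ : Finset ι), W₁ ⊆ W₂ → ∀ v : Fin m → ℝ,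
      v ⬝ᵥ Ftil W₁ *ᵥ v ≤ v ⬝ᵥ Ftil W₂ *ᵥ v := by
    intro W1 W2 hsub v
    rw [hquadF, hquadF]
    have := Finset.sum_le_sum_of_subset_of_nonneg hsub
      (fun i _ _ => mul_nonneg (hcpos i).le (sq_nonneg (x i ⬝ᵥ v)))
    linarith
  have hIxle : ∀ (W : Finset ι) (v : Fin m → ℝ), v ⬝ᵥ Ix *ᵥ v ≤ v ⬝ᵥ Ftil W *ᵥ v := by
    intro W v
    rw [hquadF]
    have : 0 ≤ ∑ i ∈ W, c i * (x i ⬝ᵥ v)^2 :=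
      Finset.sum_nonneg fun i _ => mul_nonneg (hcpos i).le (sq_nonneg _)
    linarith
  have hdet : ∀ W : Finset ι, IsUnit (Ftil W).det :=
    fun W => isUnit_iff_ne_zero.mpr (ne_of_gt (hFpd W).det_pos)
  have hgain : ∀ W : Finset ι, j ∉ W → fA (insert j W) - fA W =
      c j * (x j ⬝ᵥ ((Ftil W)⁻¹ * (Ftil W)⁻¹) *ᵥ x j) /
        (1 + c j * (x j ⬝ᵥ (Ftil W)⁻¹ *ᵥ x j)) := by
    intro W hjW
    have hins : Ftil (insert j W) = Ftil W + c j • vecMulVec (x j) (x j) := by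
      rw [hF, hF, Finset.sum_insert hjW]
      abel
    rw [hfA, hfA, hins, trace_inv_add_rankOne (hFpd W) (x j) (hcpos j).le]
    ring
  -- scalar abbreviations
  set u := x j with hu
  set bS := u ⬝ᵥ (Ftil S)⁻¹ *ᵥ u with hbSdef
  set bT := u ⬝ᵥ (Ftil T)⁻¹ *ᵥ u with hbTdef
  set aS := u ⬝ᵥ ((Ftil S)⁻¹ * (Ftil S)⁻¹) *ᵥ u with haSdef
  set aT := u ⬝ᵥ ((Ftil T)⁻¹ * (Ftil T)⁻¹) *ᵥ u with haTdef
  rw [hgain T hjT, hgain S (fun h => hjT (hST h)), hγ j]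
  set lM := lambdaMax Ix⁻¹ with hlMdef
  set lm := lambdaMin BX with hlmdef
  have hBXpd : BX.PosDef := hBX ▸ (hFpd Finset.univ).inv
  have hlm : 0 < lm := lambdaMin_pos hBXpd hm
  -- hlM : lm ≤ lM
  have hlMlm : lm ≤ lM := by
    set v0 : Fin m → ℝ := Pi.single ⟨0, hm⟩ 1 with hv0def
    have hv01 : v0 ⬝ᵥ v0 = 1 := by
      simp [hv0def, dotProduct, Pi.single_apply]
    have e1 : lm * (v0 ⬝ᵥ v0) ≤ v0 ⬝ᵥ BX *ᵥ v0 := lambdaMin_mul_le_quad hBXpd v0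
    have e2 : v0 ⬝ᵥ BX *ᵥ v0 ≤ v0 ⬝ᵥ Ix⁻¹ *ᵥ v0 := by
      rw [hBX]
      exact inv_quad_antitone hIx (hFpd Finset.univ) (hIxle Finset.univ) v0
    have e3 : v0 ⬝ᵥ Ix⁻¹ *ᵥ v0 ≤ lM * (v0 ⬝ᵥ v0) := quad_le_lambdaMax_mul hIx.inv v0
    rw [hv01] at e1 e3
    linarith
  -- wS, wT
  set wS := (Ftil S)⁻¹ *ᵥ u with hwSdef
  set wT := (Ftil T)⁻¹ *ᵥ u with hwTdef
  have hFw : ∀ W : Finset ι, Ftil W *ᵥ ((Ftil W)⁻¹ *ᵥ u) = u := fun W => by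
    rw [Matrix.mulVec_mulVec, (Ftil W).mul_nonsing_inv (hdet W), Matrix.one_mulVec]
  have haS : aS = wS ⬝ᵥ wS := by
    rw [haSdef, ← Matrix.mulVec_mulVec, dot_sym (hFpd S).inv.1]
  have haT : aT = wT ⬝ᵥ wT := by
    rw [haTdef, ← Matrix.mulVec_mulVec, dot_sym (hFpd T).inv.1]
  have hbS : bS = wS ⬝ᵥ Ftil S *ᵥ wS := by
    rw [hbSdef, dotProduct_comm]
    congr 1
    rw [hFw S]
  have hbT : bT = wT ⬝ᵥ Ftil T *ᵥ wT := by
    rw [hbTdef, dotProduct_comm]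
    congr 1
    rw [hFw T]
  have hbS0 : 0 ≤ bS := by
    have := (hFpd S).inv.posSemidef.dotProduct_mulVec_nonneg u
    simpa [hbSdef] using this
  have hbT0 : 0 ≤ bT := by
    have := (hFpd T).inv.posSemidef.dotProduct_mulVec_nonneg u
    simpa [hbTdef] using this
  have haS0 : 0 ≤ aS := by
    rw [haS]
    exact Finset.sum_nonneg fun i _ => mul_self_nonneg _
  have hIxinv : (Ix⁻¹)⁻¹ = Ix := Matrix.nonsing_inv_nonsing_inv Ix
    (isUnit_iff_ne_zero.mpr (ne_of_gt hIx.det_pos))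
  have hBXinv : BX⁻¹ = Ftil Finset.univ := by
    rw [hBX, Matrix.nonsing_inv_nonsing_inv _ (hdet Finset.univ)]
  -- h1 : aT ≤ lM * bT
  have h1 : aT ≤ lM * bT := by
    have e1 : wT ⬝ᵥ wT ≤ lM * (wT ⬝ᵥ (Ix⁻¹)⁻¹ *ᵥ wT) := dot_le_lambdaMax_mul_inv hIx.inv wT
    rw [hIxinv] at e1
    have hlM0 : (0:ℝ) ≤ lM := le_trans hlm.le hlMlm
    calc aT = wT ⬝ᵥ wT := haT
      _ ≤ lM * (wT ⬝ᵥ Ix *ᵥ wT) := e1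
      _ ≤ lM * (wT ⬝ᵥ Ftil T *ᵥ wT) := mul_le_mul_of_nonneg_left (hIxle T wT) hlM0
      _ = lM * bT := by rw [hbT]
  -- h3 : lm * bS ≤ aS
  have h3 : lm * bS ≤ aS := by
    have e1 : lm * (wS ⬝ᵥ BX⁻¹ *ᵥ wS) ≤ wS ⬝ᵥ wS := lambdaMin_mul_inv_le_dot hBXpd wS
    rw [hBXinv] at e1
    calc lm * bS = lm * (wS ⬝ᵥ Ftil S *ᵥ wS) := by rw [hbS]
      _ ≤ lm * (wS ⬝ᵥ Ftil Finset.univ *ᵥ wS) :=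
        mul_le_mul_of_nonneg_left (hmono S Finset.univ (Finset.subset_univ S) wS) hlm.le
      _ ≤ wS ⬝ᵥ wS := e1
      _ = aS := haS.symm
  -- h2 : bT ≤ bS
  have h2 : bT ≤ bS := inv_quad_antitone (hFpd S) (hFpd T) (hmono S T hST) u
  -- hg : lM / lm ≤ γ j expression
  have hsP : ((σ j) ^ 2 • P).PosDef := posDef_smul hP (pow_pos (hσ j) 2)
  set p1 := lambdaMin ((σ j) ^ 2 • P) with hp1def
  set p2 := lambdaMax ((σ j) ^ 2 • P) with hp2def
  have hp1 : 0 < p1 := lambdaMin_pos hsP hm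
  have hp12 : p1 ≤ p2 := lambdaMin_le_lambdaMax hsP hm
  have hlM0 : 0 < lM := lt_of_lt_of_le hlm hlMlm
  have hg : lM / lm ≤ lM ^ 2 * (p2 + 1) / (lm ^ 2 * (p1 + 1)) := by
    rw [div_le_div_iff₀ hlm (by positivity)]
    have key : lM * (lm * (p1 + 1)) ≤ lM * (lM * (p2 + 1)) :=
      mul_le_mul_of_nonneg_left
        (mul_le_mul hlMlm (by linarith) (by positivity) hlM0.le) hlM0.le
    nlinarith [key]
  exact frac_chain (hcpos j) hbS0 hbT0 h1 h2 h3 haS0 hlm hlMlm hg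
end
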